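/- Let f(X) = X² − X − 3 and g(X) = X² − 5X + 5 as polynomials in ℚ[X]. For every n ≥ 1, the n-th iterates f^n(X) and g^n(X) (under composition) are irreducible over ℚ. -/

import Mathlib

open Polynomial

/-- `f(X) = X² - X - 3` in `ℚ[X]`. -/
noncomputable def hanoiFpoly : ℚ[X] := X ^ 2 - X - 3

/-- `g(X) = X² - 5X + 5` in `ℚ[X]`. -/
noncomputable def hanoiGpoly : ℚ[X] := X ^ 2 - 5 * X + 5

/-- The `k`-th iterate `f^k` of `f` under composition (`f⁰(X) = X`). -/
noncomputable def hanoiFiter : ℕ → ℚ[X]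
  | 0 => X
  | k + 1 => hanoiFpoly.comp (hanoiFiter k)

/-- The `k`-th iterate `g^k` of `g` under composition (`g⁰(X) = X`). -/
noncomputable def hanoiGiter : ℕ → ℚ[X]
  | 0 => X
  | k + 1 => hanoiGpoly.comp (hanoiGiter k)



set_option synthInstance.maxHeartbeats 1000000
set_option maxHeartbeats 1600000

theorem irreducible_comp_quadratic (p : ℚ[X]) (hm : p.Monic) (hi : Irreducible p)
    (b c : ℚ)
    (hns : ¬ IsSquare ((-1 : ℚ) ^ p.natDegree * p.eval (c - b ^ 2 / 4))) :
    Irreducible (p.comp (X ^ 2 + C b * X + C c)) := by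
  set q : ℚ[X] := X ^ 2 + C b * X + C c with hq
  have hqm : q.Monic := by
    rw [hq]; monicity!
  have hqd : q.natDegree = 2 := by
    rw [hq]; compute_degree!
  set r : ℚ := c - b ^ 2 / 4 with hr
  set P : ℚ[X] := p.comp (X + C r) with hP
  have hPirr : Irreducible P := by
    have h1 : algEquivAevalXAddC r p = P := by
      simp [algEquivAevalXAddC, algEquivOfCompEqX, hP, aeval_def, comp]
    rw [← h1]
    exact (MulEquiv.irreducible_iff (algEquivAevalXAddC r).toMulEquiv).mpr hi
  have hPm : P.Monic := hm.comp_X_add_C r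
  have hP0 : P ≠ 0 := hPm.ne_zero
  have hPd : P.natDegree = p.natDegree := by
    rw [hP, natDegree_comp, natDegree_X_add_C, mul_one]
  haveI : Fact (Irreducible P) := ⟨hPirr⟩
  set L := AdjoinRoot P with hL
  set δ : L := AdjoinRoot.root P with hδ
  have hmin : minpoly ℚ δ = P := by
    rw [hδ, show minpoly ℚ (AdjoinRoot.root P) = _ from AdjoinRoot.minpoly_root hP0, hPm.leadingCoeff, inv_one, map_one, mul_one]
  have hδint : IsIntegral ℚ δ :=
    ⟨P, hPm, by rw [hδ]; exact AdjoinRoot.eval₂_root P⟩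
  have hnorm : Algebra.norm ℚ δ = (-1 : ℚ) ^ p.natDegree * p.eval r := by
    have h := Algebra.PowerBasis.norm_gen_eq_coeff_zero_minpoly (AdjoinRoot.powerBasis hP0)
    rw [AdjoinRoot.powerBasis_gen] at h
    rw [← hδ] at h
    replace h : Algebra.norm ℚ δ = (-1 : ℚ) ^ (AdjoinRoot.powerBasis hP0).dim * (minpoly ℚ δ).coeff 0 := h
    rw [h, hmin]
    have : (AdjoinRoot.powerBasis hP0).dim = p.natDegree := by
      rw [AdjoinRoot.powerBasis_dim, hPd]
    rw [this]
    congr 1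
    rw [coeff_zero_eq_eval_zero, hP, eval_comp]
    simp
  have hδns : ¬ IsSquare δ := by
    intro hsq
    exact hns (hnorm ▸ hsq.map (Algebra.norm ℚ))
  -- the quadratic over L
  set α : L := δ + algebraMap ℚ L r with hα
  set qL : L[X] := X ^ 2 + C (algebraMap ℚ L b) * X + C (algebraMap ℚ L c - α) with hqL
  have hqLm : qL.Monic := by rw [hqL]; monicity!
  have hqLd : qL.natDegree = 2 := by rw [hqL]; compute_degree!
  have hroots : qL.roots = 0 := by
    by_contra h
    obtain ⟨t, ht⟩ := Multiset.exists_mem_of_ne_zero h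
    have ht' : eval t qL = 0 := (mem_roots hqLm.ne_zero).mp ht
    rw [hqL] at ht'
    simp only [eval_add, eval_pow, eval_X, eval_mul, eval_C, eval_sub] at ht'
    apply hδns
    have hB2 : algebraMap ℚ L r = algebraMap ℚ L c - algebraMap ℚ L (b/2) ^ 2 := by
      rw [← map_pow, ← map_sub]; congr 1; rw [hr]; ring
    have hbb : algebraMap ℚ L b = 2 * algebraMap ℚ L (b/2) := by
      rw [show ((2:L)) = algebraMap ℚ L 2 by simp, ← map_mul]; congr 1; ring
    refine ⟨t + algebraMap ℚ L (b/2), ?_⟩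
    rw [hα, hB2, hbb] at ht'
    linear_combination -ht'
  have hqLirr : Irreducible qL :=
    (hqLm.irreducible_iff_roots_eq_zero_of_degree_le_three (by omega) (by omega)).mpr hroots
  haveI : Fact (Irreducible qL) := ⟨hqLirr⟩
  have hqL0 : qL ≠ 0 := hqLm.ne_zero
  set M := AdjoinRoot qL with hM
  set θ : M := AdjoinRoot.root qL with hθ
  haveI : FiniteDimensional ℚ L := (AdjoinRoot.powerBasis hP0).finite
  haveI : FiniteDimensional L M := (AdjoinRoot.powerBasis hqL0).finite
  haveI : FiniteDimensional ℚ M := Module.Finite.trans L M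
  -- aeval θ qL = 0
  have hθ0 : aeval θ qL = 0 := by
    rw [hθ, aeval_def, AdjoinRoot.algebraMap_eq]; exact AdjoinRoot.eval₂_root qL
  have hθ0' : θ ^ 2 + algebraMap L M (algebraMap ℚ L b) * θ
      + (algebraMap L M (algebraMap ℚ L c) - algebraMap L M α) = 0 := by
    have h := hθ0
    simp only [hqL, map_add, map_pow, map_mul, map_sub, aeval_X, aeval_C] at h
    linear_combination h
  -- aeval θ q = algebraMap L M α
  have htow : ∀ x : ℚ, algebraMap ℚ M x = algebraMap L M (algebraMap ℚ L x) := fun x =>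
    IsScalarTower.algebraMap_apply ℚ L M x
  have hθq : aeval θ q = algebraMap L M α := by
    rw [hq]
    simp only [map_add, map_pow, map_mul, aeval_X, aeval_C]
    rw [htow b, htow c]
    linear_combination hθ0'
  have hαp : aeval α p = 0 := by
    have h0 : aeval δ P = 0 := by
      rw [hδ, aeval_def]; exact AdjoinRoot.eval₂_root P
    simp only [hP, aeval_comp] at h0
    have : aeval δ (X + C r) = α := by rw [hα]; simp
    rwa [this] at h0
  have hθroot : aeval θ (p.comp q) = 0 := by
    rw [aeval_comp, hθq, aeval_algebraMap_apply, hαp, map_zero]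
  have hθint : IsIntegral ℚ θ := IsIntegral.of_finite ℚ θ
  -- generation: ℚ⟮θ⟯ = ⊤
  have hθmem : θ ∈ IntermediateField.adjoin ℚ {θ} :=
    IntermediateField.mem_adjoin_simple_self ℚ θ
  set F := IntermediateField.adjoin ℚ {θ} with hF
  have hαF : algebraMap L M α ∈ F := by
    rw [← hθq, hq]
    simp only [map_add, map_pow, map_mul, aeval_X, aeval_C]
    exact add_mem (add_mem (pow_mem hθmem 2) (mul_mem (F.algebraMap_mem b) hθmem))
      (F.algebraMap_mem c)
  have hLF : ∀ y : L, algebraMap L M y ∈ F := by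
    intro y
    have hy : y ∈ Algebra.adjoin ℚ ({δ} : Set L) := by
      rw [hδ, show Algebra.adjoin ℚ ({AdjoinRoot.root P} : Set L) = ⊤ from AdjoinRoot.adjoinRoot_eq_top]; trivial
    induction hy using Algebra.adjoin_induction with
    | mem x hx =>
      rw [Set.mem_singleton_iff] at hx
      subst hx
      have : algebraMap L M δ = algebraMap L M α - algebraMap ℚ M r := by
        rw [hα, map_add, htow r]; ring
      rw [this]
      exact sub_mem hαF (F.algebraMap_mem r)
    | algebraMap x => rw [← htow x]; exact F.algebraMap_mem x
    | add x y _ _ hx hy => rw [map_add]; exact add_mem hx hy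
    | mul x y _ _ hx hy => rw [map_mul]; exact mul_mem hx hy
  have hgen : F = ⊤ := by
    rw [eq_top_iff]
    intro x hxt
    clear hxt
    have hx : x ∈ Algebra.adjoin L ({θ} : Set M) := by
      rw [hθ, AdjoinRoot.adjoinRoot_eq_top]; trivial
    induction hx using Algebra.adjoin_induction with
    | mem x hx =>
      rw [Set.mem_singleton_iff] at hx; subst hx; exact hθmem
    | algebraMap y => exact hLF y
    | add x y _ _ hx hy => exact add_mem hx hy
    | mul x y _ _ hx hy => exact mul_mem hx hy
  -- degree computation
  have hfinM : Module.finrank ℚ M = p.natDegree * 2 := by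
    have h1 : Module.finrank ℚ L = p.natDegree := by
      rw [(AdjoinRoot.powerBasis hP0).finrank, AdjoinRoot.powerBasis_dim, hPd]
    have h2 : Module.finrank L M = 2 := by
      rw [(AdjoinRoot.powerBasis hqL0).finrank, AdjoinRoot.powerBasis_dim, hqLd]
    rw [← Module.finrank_mul_finrank ℚ L M, h1, h2]
  have hdeg : (minpoly ℚ θ).natDegree = p.natDegree * 2 := by
    rw [← IntermediateField.adjoin.finrank hθint, ← hF, hgen,
      IntermediateField.finrank_top', hfinM]
  have hDdeg : (p.comp q).natDegree = p.natDegree * 2 := by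
    rw [natDegree_comp, hqd]
  have hDm : (p.comp q).Monic := hm.comp hqm (by rw [hqd]; norm_num)
  have hdvd : minpoly ℚ θ ∣ p.comp q := minpoly.dvd ℚ θ hθroot
  have hmm : (minpoly ℚ θ).Monic := minpoly.monic hθint
  obtain ⟨u, hu⟩ := hdvd
  have hu0 : u ≠ 0 := by
    rintro rfl
    rw [mul_zero] at hu
    exact hDm.ne_zero hu
  have hud : u.natDegree = 0 := by
    have := hu ▸ hDdeg
    rw [natDegree_mul hmm.ne_zero hu0, hdeg] at this
    omega
  have hum : u.Monic := by
    have := hDm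
    rw [hu] at this
    exact hmm.of_mul_monic_left this
  have hu1 : u = 1 := hum.natDegree_eq_zero.mp hud
  rw [hu1, mul_one] at hu
  rw [hu]
  exact minpoly.irreducible hθint



/-- A rational square that is an integer is an integer square. -/
lemma isSquare_int_of_isSquare_ratCast {m : ℤ} (h : IsSquare ((m : ℚ))) : IsSquare m := by
  obtain ⟨y, hy⟩ := h
  have hden : y.den = 1 := by
    have h1 : (y * y).den = 1 := by rw [← hy]; exact Rat.den_intCast m
    have h2 : (y * y).den = y.den * y.den := Rat.mul_self_den y
    nlinarith [y.den_pos]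
  have hy' : (y.num : ℚ) = y := by
    rw [← Rat.den_eq_one_iff]; exact hden
  refine ⟨y.num, ?_⟩
  have : ((m : ℚ)) = ((y.num * y.num : ℤ) : ℚ) := by push_cast [hy']; exact hy
  exact_mod_cast this

/-- scaled denominators -/
def hanoiT : ℕ → ℤ
  | 0 => 4
  | n + 1 => hanoiT n ^ 2

def hanoiMf : ℕ → ℤ
  | 0 => -13
  | n + 1 => hanoiMf n ^ 2 - hanoiT n * hanoiMf n - 3 * hanoiT n ^ 2

def hanoiMg : ℕ → ℤ
  | 0 => -5
  | n + 1 => hanoiMg n ^ 2 - 5 * hanoiT n * hanoiMg n + 5 * hanoiT n ^ 2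

lemma hanoiT_sq : ∀ n, ∃ u : ℤ, u ≠ 0 ∧ hanoiT n = u ^ 2
  | 0 => ⟨2, by norm_num, by norm_num [hanoiT]⟩
  | n + 1 => by
    obtain ⟨u, hu, h⟩ := hanoiT_sq n
    exact ⟨u ^ 2, pow_ne_zero 2 hu, by rw [hanoiT, h]⟩

lemma hanoiT_ne_zero (n : ℕ) : (hanoiT n : ℚ) ≠ 0 := by
  obtain ⟨u, hu, h⟩ := hanoiT_sq n
  rw [h]
  push_cast
  positivity


lemma hanoiFiter_eval : ∀ n, eval (-13/4 : ℚ) (hanoiFiter n) = (hanoiMf n : ℚ) / (hanoiT n : ℚ)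
  | 0 => by norm_num [hanoiFiter, hanoiMf, hanoiT]
  | n + 1 => by
    have hT := hanoiT_ne_zero n
    rw [hanoiFiter, eval_comp, hanoiFiter_eval n]
    show eval _ hanoiFpoly = ((hanoiMf (n+1) : ℤ) : ℚ) / ((hanoiT (n+1) : ℤ) : ℚ)
    rw [hanoiMf, hanoiT]
    simp only [hanoiFpoly, eval_sub, eval_pow, eval_X, eval_ofNat]
    push_cast
    field_simp

lemma hanoiGiter_eval : ∀ n, eval (-5/4 : ℚ) (hanoiGiter n) = (hanoiMg n : ℚ) / (hanoiT n : ℚ)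
  | 0 => by norm_num [hanoiGiter, hanoiMg, hanoiT]
  | n + 1 => by
    have hT := hanoiT_ne_zero n
    rw [hanoiGiter, eval_comp, hanoiGiter_eval n]
    show eval _ hanoiGpoly = ((hanoiMg (n+1) : ℤ) : ℚ) / ((hanoiT (n+1) : ℤ) : ℚ)
    rw [hanoiMg, hanoiT]
    simp only [hanoiGpoly, eval_add, eval_sub, eval_pow, eval_X, eval_mul, eval_ofNat]
    push_cast
    field_simp

lemma hanoiMf_mod3 : ∀ n, ((hanoiMf n : ZMod 3) = 2 ∧ (hanoiT n : ZMod 3) = 1)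
  | 0 => by constructor <;> · show ((_ : ℤ) : ZMod 3) = _; push_cast; decide
  | n + 1 => by
    obtain ⟨h1, h2⟩ := hanoiMf_mod3 n
    constructor
    · show ((hanoiMf n ^ 2 - hanoiT n * hanoiMf n - 3 * hanoiT n ^ 2 : ℤ) : ZMod 3) = 2
      push_cast
      rw [h1, h2]
      decide
    · show ((hanoiT n ^ 2 : ℤ) : ZMod 3) = 1
      push_cast
      rw [h2]
      decide

lemma hanoiMg_mod11 : ∀ n,
    ((hanoiMg n : ZMod 11) = 6 ∧ (hanoiT n : ZMod 11) = 4) ∨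
    ((hanoiMg n : ZMod 11) = 7 ∧ (hanoiT n : ZMod 11) = 5) ∨
    ((hanoiMg n : ZMod 11) = 10 ∧ (hanoiT n : ZMod 11) = 3) ∨
    ((hanoiMg n : ZMod 11) = 6 ∧ (hanoiT n : ZMod 11) = 9)
  | 0 => by
    left
    constructor <;> · show ((_ : ℤ) : ZMod 11) = _; push_cast; decide
  | n + 1 => by
    have hM : ((hanoiMg (n+1) : ZMod 11))
        = (hanoiMg n : ZMod 11) ^ 2 - 5 * (hanoiT n : ZMod 11) * (hanoiMg n : ZMod 11)
          + 5 * (hanoiT n : ZMod 11) ^ 2 := by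
      show ((hanoiMg n ^ 2 - 5 * hanoiT n * hanoiMg n + 5 * hanoiT n ^ 2 : ℤ) : ZMod 11) = _
      push_cast
      ring
    have hT : ((hanoiT (n+1) : ZMod 11)) = (hanoiT n : ZMod 11) ^ 2 := by
      show ((hanoiT n ^ 2 : ℤ) : ZMod 11) = _
      push_cast
      ring
    rcases hanoiMg_mod11 n with ⟨h1, h2⟩ | ⟨h1, h2⟩ | ⟨h1, h2⟩ | ⟨h1, h2⟩ <;>
      rw [hM, hT, h1, h2] <;> decide

lemma not_isSquare_hanoiF_eval (n : ℕ) : ¬ IsSquare (eval (-13/4 : ℚ) (hanoiFiter n)) := by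
  intro hsq
  rw [hanoiFiter_eval n] at hsq
  obtain ⟨u, hu, hT⟩ := hanoiT_sq n
  have hint : IsSquare ((hanoiMf n : ℚ)) := by
    obtain ⟨y, hy⟩ := hsq
    refine ⟨y * (u : ℚ), ?_⟩
    have hu' : ((u : ℚ)) ≠ 0 := Int.cast_ne_zero.mpr hu
    have hTq : ((hanoiT n : ℚ)) = (u : ℚ) ^ 2 := by rw [hT]; push_cast; ring
    field_simp [hTq] at hy
    rw [hy, hTq]; ring
  have h3 : IsSquare ((hanoiMf n : ZMod 3)) := by
    have := hint
    obtain ⟨y, hy⟩ := isSquare_int_of_isSquare_ratCast hint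
    exact ⟨(y : ZMod 3), by rw [hy]; push_cast; ring⟩
  rw [(hanoiMf_mod3 n).1] at h3
  revert h3
  decide

lemma not_isSquare_hanoiG_eval (n : ℕ) : ¬ IsSquare (eval (-5/4 : ℚ) (hanoiGiter n)) := by
  intro hsq
  rw [hanoiGiter_eval n] at hsq
  obtain ⟨u, hu, hT⟩ := hanoiT_sq n
  have hint : IsSquare ((hanoiMg n : ℚ)) := by
    obtain ⟨y, hy⟩ := hsq
    refine ⟨y * (u : ℚ), ?_⟩
    have hu' : ((u : ℚ)) ≠ 0 := Int.cast_ne_zero.mpr hu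
    have hTq : ((hanoiT n : ℚ)) = (u : ℚ) ^ 2 := by rw [hT]; push_cast; ring
    field_simp [hTq] at hy
    rw [hy, hTq]; ring
  have h11 : IsSquare ((hanoiMg n : ZMod 11)) := by
    obtain ⟨y, hy⟩ := isSquare_int_of_isSquare_ratCast hint
    exact ⟨(y : ZMod 11), by rw [hy]; push_cast; ring⟩
  rcases hanoiMg_mod11 n with ⟨h1, _⟩ | ⟨h1, _⟩ | ⟨h1, _⟩ | ⟨h1, _⟩ <;>
    rw [h1] at h11 <;> revert h11 <;> decide

lemma hanoiFpoly_eq : hanoiFpoly = X ^ 2 + C (-1 : ℚ) * X + C (-3 : ℚ) := by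
  unfold hanoiFpoly
  simp only [map_neg, map_one, map_ofNat]
  ring

lemma hanoiGpoly_eq : hanoiGpoly = X ^ 2 + C (-5 : ℚ) * X + C (5 : ℚ) := by
  unfold hanoiGpoly
  simp only [map_neg, map_one, map_ofNat]
  ring

lemma hanoiFiter_comp (n : ℕ) : hanoiFiter (n + 1) = (hanoiFiter n).comp hanoiFpoly := by
  induction n with
  | zero => show hanoiFpoly.comp X = X.comp hanoiFpoly; rw [comp_X, X_comp]
  | succ k ih =>
    calc hanoiFiter (k + 2) = hanoiFpoly.comp (hanoiFiter (k + 1)) := rfl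
      _ = hanoiFpoly.comp ((hanoiFiter k).comp hanoiFpoly) := by rw [ih]
      _ = (hanoiFpoly.comp (hanoiFiter k)).comp hanoiFpoly := by rw [comp_assoc]
      _ = (hanoiFiter (k + 1)).comp hanoiFpoly := rfl

lemma hanoiGiter_comp (n : ℕ) : hanoiGiter (n + 1) = (hanoiGiter n).comp hanoiGpoly := by
  induction n with
  | zero => show hanoiGpoly.comp X = X.comp hanoiGpoly; rw [comp_X, X_comp]
  | succ k ih =>
    calc hanoiGiter (k + 2) = hanoiGpoly.comp (hanoiGiter (k + 1)) := rfl
      _ = hanoiGpoly.comp ((hanoiGiter k).comp hanoiGpoly) := by rw [ih]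
      _ = (hanoiGpoly.comp (hanoiGiter k)).comp hanoiGpoly := by rw [comp_assoc]
      _ = (hanoiGiter (k + 1)).comp hanoiGpoly := rfl

lemma hanoiFpoly_monic : hanoiFpoly.Monic := by unfold hanoiFpoly; monicity!
lemma hanoiGpoly_monic : hanoiGpoly.Monic := by unfold hanoiGpoly; monicity!
lemma hanoiFpoly_deg : hanoiFpoly.natDegree = 2 := by unfold hanoiFpoly; compute_degree!
lemma hanoiGpoly_deg : hanoiGpoly.natDegree = 2 := by unfold hanoiGpoly; compute_degree!

lemma hanoiFiter_monic_deg : ∀ n, (hanoiFiter n).Monic ∧ (hanoiFiter n).natDegree = 2 ^ n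
  | 0 => ⟨monic_X, by simp [hanoiFiter]⟩
  | n + 1 => by
    obtain ⟨h1, h2⟩ := hanoiFiter_monic_deg n
    refine ⟨hanoiFpoly_monic.comp h1 (by rw [h2]; positivity), ?_⟩
    show (hanoiFpoly.comp (hanoiFiter n)).natDegree = 2 ^ (n + 1)
    rw [natDegree_comp, hanoiFpoly_deg, h2, pow_succ, mul_comm]

lemma hanoiGiter_monic_deg : ∀ n, (hanoiGiter n).Monic ∧ (hanoiGiter n).natDegree = 2 ^ n
  | 0 => ⟨monic_X, by simp [hanoiGiter]⟩
  | n + 1 => by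
    obtain ⟨h1, h2⟩ := hanoiGiter_monic_deg n
    refine ⟨hanoiGpoly_monic.comp h1 (by rw [h2]; positivity), ?_⟩
    show (hanoiGpoly.comp (hanoiGiter n)).natDegree = 2 ^ (n + 1)
    rw [natDegree_comp, hanoiGpoly_deg, h2, pow_succ, mul_comm]

lemma hanoiFpoly_irreducible : Irreducible hanoiFpoly := by
  have h := irreducible_comp_quadratic X monic_X irreducible_X (-1) (-3) ?_
  · rwa [X_comp, ← hanoiFpoly_eq] at h
  · intro hsq
    have hval : ((-1 : ℚ)) ^ (X : ℚ[X]).natDegree * eval ((-3 : ℚ) - (-1 : ℚ) ^ 2 / 4) X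
        = ((13 : ℤ) : ℚ) / ((2 : ℤ) : ℚ) ^ 2 := by
      rw [natDegree_X, eval_X]; norm_num
    rw [hval] at hsq
    have hint : IsSquare (((13 : ℤ) : ℚ)) := by
      obtain ⟨y, hy⟩ := hsq
      refine ⟨y * ((2 : ℤ) : ℚ), ?_⟩
      field_simp at hy
      push_cast
      linear_combination hy
    obtain ⟨y, hy⟩ := isSquare_int_of_isSquare_ratCast hint
    have : IsSquare ((13 : ℤ) : ZMod 5) := ⟨(y : ZMod 5), by rw [hy]; push_cast; ring⟩
    revert this
    decide

lemma hanoiGpoly_irreducible : Irreducible hanoiGpoly := by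
  have h := irreducible_comp_quadratic X monic_X irreducible_X (-5) 5 ?_
  · rwa [X_comp, ← hanoiGpoly_eq] at h
  · intro hsq
    have hval : ((-1 : ℚ)) ^ (X : ℚ[X]).natDegree * eval ((5 : ℚ) - (-5 : ℚ) ^ 2 / 4) X
        = ((5 : ℤ) : ℚ) / ((2 : ℤ) : ℚ) ^ 2 := by
      rw [natDegree_X, eval_X]; norm_num
    rw [hval] at hsq
    have hint : IsSquare (((5 : ℤ) : ℚ)) := by
      obtain ⟨y, hy⟩ := hsq
      refine ⟨y * ((2 : ℤ) : ℚ), ?_⟩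
      field_simp at hy
      push_cast
      linear_combination hy
    obtain ⟨y, hy⟩ := isSquare_int_of_isSquare_ratCast hint
    have : IsSquare ((5 : ℤ) : ZMod 3) := ⟨(y : ZMod 3), by rw [hy]; push_cast; ring⟩
    revert this
    decide

lemma hanoiFiter_irreducible (n : ℕ) (hn : 1 ≤ n) : Irreducible (hanoiFiter n) := by
  induction n with
  | zero => omega
  | succ k ih =>
    rcases Nat.eq_zero_or_pos k with rfl | hk
    · show Irreducible (hanoiFpoly.comp (hanoiFiter 0))
      rw [show hanoiFiter 0 = X from rfl, comp_X]
      exact hanoiFpoly_irreducible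
    · have hirr := ih hk
      obtain ⟨hmon, hdeg⟩ := hanoiFiter_monic_deg k
      rw [hanoiFiter_comp k, hanoiFpoly_eq]
      apply irreducible_comp_quadratic _ hmon hirr
      intro hsq
      apply not_isSquare_hanoiF_eval k
      have he : ((-3 : ℚ)) - (-1 : ℚ) ^ 2 / 4 = -13/4 := by norm_num
      have hev : ((-1 : ℚ)) ^ (hanoiFiter k).natDegree = 1 := by
        rw [hdeg]
        exact Even.neg_one_pow ((Nat.even_pow.mpr ⟨even_two, by omega⟩))
      rwa [he, hev, one_mul] at hsq

lemma hanoiGiter_irreducible (n : ℕ) (hn : 1 ≤ n) : Irreducible (hanoiGiter n) := by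
  induction n with
  | zero => omega
  | succ k ih =>
    rcases Nat.eq_zero_or_pos k with rfl | hk
    · show Irreducible (hanoiGpoly.comp (hanoiGiter 0))
      rw [show hanoiGiter 0 = X from rfl, comp_X]
      exact hanoiGpoly_irreducible
    · have hirr := ih hk
      obtain ⟨hmon, hdeg⟩ := hanoiGiter_monic_deg k
      rw [hanoiGiter_comp k, hanoiGpoly_eq]
      apply irreducible_comp_quadratic _ hmon hirr
      intro hsq
      apply not_isSquare_hanoiG_eval k
      have he : ((5 : ℚ)) - (-5 : ℚ) ^ 2 / 4 = -5/4 := by norm_num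
      have hev : ((-1 : ℚ)) ^ (hanoiGiter k).natDegree = 1 := by
        rw [hdeg]
        exact Even.neg_one_pow ((Nat.even_pow.mpr ⟨even_two, by omega⟩))
      rwa [he, hev, one_mul] at hsq

/-- For every `n ≥ 1`, the iterates `f^n` and `g^n` of `f(X) = X² - X - 3` and
`g(X) = X² - 5X + 5` are irreducible over `ℚ`. -/
theorem hanoi_iterates_irreducible (n : ℕ) (hn : 1 ≤ n) :
    Irreducible (hanoiFiter n) ∧ Irreducible (hanoiGiter n) :=
  ⟨hanoiFiter_irreducible n hn, hanoiGiter_irreducible n hn⟩
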